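/- arXiv:2211.03558 — 3 statements merged into one kernel-verified Lean document; each statement's English description precedes it below -/
import Mathlib

section
/- Let n ≥ 2, r > 0, and let Δ_r ⊂ ℝⁿ be the caterpillar bending polytope defined by the inequalities ℓ_{i,j}(u) ≥ 0 (with ℓ_{1,0}(u) = 2r − u₁, ℓ_{2,0}(u) = 4r − u₁ − u₂, ℓ_{1,2}(u) = u₂ − u₁, among others). If u ∈ Δ_r satisfies ℓ_{1,0}(u) = 0, then also ℓ_{2,0}(u) = 0 and ℓ_{1,2}(u) = 0, and u₁ = u₂ = 2r. In particular the hyperplane {ℓ_{1,0} = 0} meets Δ_r in a face of codimension at least two. -/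
/-- If a point `u` of the equilateral caterpillar bending polytope `Δ_r` satisfies
`ℓ_{1,0}(u) = 2r − u₁ = 0`, then also `ℓ_{2,0}(u) = 0`, `ℓ_{1,2}(u) = 0`, and
`u₁ = u₂ = 2r`; so `{ℓ_{1,0} = 0}` meets `Δ_r` in a face of codimension at least two. -/
theorem stmt5 (n : ℕ) (hn : 2 ≤ n) (r : ℝ) (hr : 0 < r) (u : ℕ → ℝ)
    (h0 : u 0 = 0) (htop : u (n + 1) = ((n : ℝ) + 1) * r)
    (hmem0 : ∀ i, 1 ≤ i → i ≤ n + 1 → 0 ≤ 2 * (i : ℝ) * r - u (i - 1) - u i)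
    (hmem1 : ∀ i, 1 ≤ i → i ≤ n + 1 → 0 ≤ 2 * r - u i + u (i - 1))
    (hmem2 : ∀ i, i ≤ n → 0 ≤ u (i + 1) - u i)
    (hface : 2 * r - u 1 = 0) :
    4 * r - u 1 - u 2 = 0 ∧ u 2 - u 1 = 0 ∧ u 1 = 2 * r ∧ u 2 = 2 * r := by
  have h1 := hmem0 2 (by omega) (by omega)
  have h2 := hmem2 1 (by omega)
  norm_num at h1
  refine ⟨by linarith, by linarith, by linarith, by linarith⟩
end

section
/- Let n ≥ 3 and r > 0, and let Δ_r ⊂ ℝⁿ be the caterpillar bending polytope with defining functions ℓ_{i,j} as above (equilateral case). Fix i with 2 ≤ i ≤ n−1 (if n ≥ 3). Then there exists a point u ∈ Δ_r with ℓ_{i,0}(u) = 0 and ℓ_{i',j'}(u) > 0 for every other pair (i',j'). In particular the hyperplane {ℓ_{i,0} = 0} contains a facet of Δ_r. (For example, u obtained from the center (r, 2r, ..., nr) by replacing u_{i−1} with (i−1+1/2)r and u_i with (i+1/2)r works.) -/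
/-- For `2 ≤ i ≤ n−1`, there is a point `u` of the equilateral caterpillar bending polytope
with `ℓ_{i,0}(u) = 0` and all the other defining functions strictly positive; so the
hyperplane `{ℓ_{i,0} = 0}` contains a facet of `Δ_r`. -/
theorem stmt6 (n : ℕ) (hn : 3 ≤ n) (r : ℝ) (hr : 0 < r) (i : ℕ)
    (hi1 : 2 ≤ i) (hi2 : i ≤ n - 1) :
    ∃ u : ℕ → ℝ, u 0 = 0 ∧ u (n + 1) = ((n : ℝ) + 1) * r ∧
      (2 * (i : ℝ) * r - u (i - 1) - u i = 0) ∧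
      (∀ i', 1 ≤ i' → i' ≤ n + 1 → i' ≠ i → 0 < 2 * (i' : ℝ) * r - u (i' - 1) - u i') ∧
      (∀ i', 1 ≤ i' → i' ≤ n + 1 → 0 < 2 * r - u i' + u (i' - 1)) ∧
      (∀ i', i' ≤ n → 0 < u (i' + 1) - u i') := by
  have hin : i + 1 ≤ n := by omega
  set u : ℕ → ℝ := fun k =>
    if k = i - 1 then ((i:ℝ) - 1/2) * r
    else if k = i then ((i:ℝ) + 1/2) * r
    else (k:ℝ) * r with hu
  have hval : ∀ k : ℕ, k ≠ i - 1 → k ≠ i → u k = (k:ℝ) * r := by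
    intro k h1 h2; simp [hu, h1, h2]
  have hvim : u (i - 1) = ((i:ℝ) - 1/2) * r := by simp [hu]
  have hvi : u i = ((i:ℝ) + 1/2) * r := by
    have : i ≠ i - 1 := by omega
    simp [hu, this]
  have hcast : ((i - 1 : ℕ) : ℝ) = (i:ℝ) - 1 := by
    push_cast [Nat.cast_sub (by omega : 1 ≤ i)]; ring
  refine ⟨u, ?_, ?_, ?_, ?_, ?_, ?_⟩
  · rw [hval 0 (by omega) (by omega)]; norm_num
  · rw [hval (n+1) (by omega) (by omega)]; push_cast; ring
  · rw [hvim, hvi]; ring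
  · intro i' h1 h2 h3
    have hc : ((i' - 1 : ℕ) : ℝ) = (i':ℝ) - 1 := by
      push_cast [Nat.cast_sub h1]; ring
    rcases eq_or_ne i' (i-1) with h | h
    · subst h
      rw [hvim, hval (i-1-1) (by omega) (by omega)]
      have : ((i - 1 - 1 : ℕ) : ℝ) = (i:ℝ) - 2 := by
        push_cast [Nat.cast_sub (by omega : 1 ≤ i - 1), Nat.cast_sub (by omega : 1 ≤ i)]; ring
      rw [this, hcast]; nlinarith
    rcases eq_or_ne i' (i+1) with h' | h'
    · subst h'
      have : (i + 1 - 1 : ℕ) = i := by omega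
      rw [this, hvi, hval (i+1) (by omega) (by omega)]
      push_cast; nlinarith
    · have e1 : i' - 1 ≠ i - 1 := by omega
      have e2 : i' - 1 ≠ i := by omega
      rw [hval i' (by omega) h3, hval (i'-1) e1 e2, hc]; nlinarith
  · intro i' h1 h2
    have hc : ((i' - 1 : ℕ) : ℝ) = (i':ℝ) - 1 := by
      push_cast [Nat.cast_sub h1]; ring
    rcases eq_or_ne i' (i-1) with h | h
    · subst h
      rw [hvim, hval (i-1-1) (by omega) (by omega)]
      have : ((i - 1 - 1 : ℕ) : ℝ) = (i:ℝ) - 2 := by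
        push_cast [Nat.cast_sub (by omega : 1 ≤ i - 1), Nat.cast_sub (by omega : 1 ≤ i)]; ring
      rw [this]; nlinarith
    rcases eq_or_ne i' i with h' | h'
    · rw [h', hvi, hvim]; nlinarith
    rcases eq_or_ne i' (i+1) with h'' | h''
    · subst h''
      have : (i + 1 - 1 : ℕ) = i := by omega
      rw [this, hvi, hval (i+1) (by omega) (by omega)]
      push_cast; nlinarith
    · have e1 : i' - 1 ≠ i - 1 := by omega
      have e2 : i' - 1 ≠ i := by omega
      rw [hval i' h (by omega)]
      rw [hval (i'-1) e1 e2, hc]; nlinarith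
  · intro i' h1
    rcases eq_or_ne i' (i-2) with h | h
    · subst h
      have : (i - 2 + 1 : ℕ) = i - 1 := by omega
      rw [this, hvim, hval (i-2) (by omega) (by omega)]
      have : ((i - 2 : ℕ) : ℝ) = (i:ℝ) - 2 := by
        push_cast [Nat.cast_sub (by omega : 2 ≤ i)]; ring
      rw [this]; nlinarith
    rcases eq_or_ne i' (i-1) with h' | h'
    · subst h'
      have : (i - 1 + 1 : ℕ) = i := by omega
      rw [this, hvi, hvim]; nlinarith
    rcases eq_or_ne i' i with h'' | h''
    · rw [h'', hvi, hval (i+1) (by omega) (by omega)]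
      push_cast; nlinarith
    · have e1 : i' + 1 ≠ i - 1 := by omega
      have e2 : i' + 1 ≠ i := by omega
      rw [hval i' h' h'', hval (i'+1) e1 e2]
      push_cast; nlinarith
end

section
/- Consider the Laurent polynomial W(y₁, y₂, y₃) = y₂ + (y₁ + 1/y₁ + y₃ + 1/y₃)/y₂ on (ℂ*)³. The set of critical values of W is exactly {4, −4, 4i, −4i}. -/
noncomputable def W3 : ℂ → ℂ → ℂ → ℂ :=
  fun y1 y2 y3 => y2 + (y1 + 1 / y1 + y3 + 1 / y3) / y2

lemma hd1 (y1 y2 y3 : ℂ) (h1 : y1 ≠ 0) :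
    HasDerivAt (fun t => W3 t y2 y3) ((1 + -(y1 ^ 2)⁻¹) / y2) y1 := by
  have h : HasDerivAt (fun t : ℂ => y2 + (t + t⁻¹ + y3 + (1:ℂ)/y3) / y2)
      ((1 + -(y1 ^ 2)⁻¹) / y2) y1 :=
    ((((hasDerivAt_id y1).add (hasDerivAt_inv h1)).add_const y3).add_const
      ((1:ℂ)/y3)).div_const y2 |>.const_add y2
  simpa [W3, one_div] using h

lemma hd2 (y1 y2 y3 : ℂ) (h2 : y2 ≠ 0) :
    HasDerivAt (fun t => W3 y1 t y3)
      (1 + (y1 + 1 / y1 + y3 + 1 / y3) * -(y2 ^ 2)⁻¹) y2 := by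
  have h : HasDerivAt (fun t : ℂ => t + (y1 + 1 / y1 + y3 + 1 / y3) * t⁻¹)
      (1 + (y1 + 1 / y1 + y3 + 1 / y3) * -(y2 ^ 2)⁻¹) y2 :=
    (hasDerivAt_id y2).add ((hasDerivAt_inv h2).const_mul _)
  simpa [W3, div_eq_mul_inv] using h

lemma hd3 (y1 y2 y3 : ℂ) (h3 : y3 ≠ 0) :
    HasDerivAt (fun t => W3 y1 y2 t) ((1 + -(y3 ^ 2)⁻¹) / y2) y3 := by
  have h : HasDerivAt (fun t : ℂ => y2 + (y1 + (1:ℂ)/y1 + t + t⁻¹) / y2)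
      ((1 + -(y3 ^ 2)⁻¹) / y2) y3 := by
    have h' := (((hasDerivAt_id y3).add (hasDerivAt_inv h3)).const_add
      (y1 + (1:ℂ)/y1)).div_const y2 |>.const_add y2
    have e : (fun t : ℂ => y2 + (y1 + (1:ℂ)/y1 + t + t⁻¹) / y2) =
        (fun x => y2 + (y1 + 1/y1 + (((id : ℂ → ℂ) + fun y => y⁻¹ : ℂ → ℂ)) x) / y2) := by
      funext x; simp only [Pi.add_apply, id_eq]; ring
    rw [e]; exact h'
  simpa [W3, one_div] using h

example : True := trivial

/-- The set of critical values of `W3` on `(ℂ*)³` is exactly `{4, −4, 4i, −4i}`. -/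
theorem stmt12 :
    {w : ℂ | ∃ y1 y2 y3 : ℂ, y1 ≠ 0 ∧ y2 ≠ 0 ∧ y3 ≠ 0 ∧
        deriv (fun t => W3 t y2 y3) y1 = 0 ∧ deriv (fun t => W3 y1 t y3) y2 = 0 ∧
        deriv (fun t => W3 y1 y2 t) y3 = 0 ∧ w = W3 y1 y2 y3} =
      {4, -4, 4 * Complex.I, -4 * Complex.I} := by
  have hI := Complex.I_sq
  ext w
  simp only [Set.mem_setOf_eq, Set.mem_insert_iff, Set.mem_singleton_iff]
  constructor
  · rintro ⟨y1, y2, y3, h1, h2, h3, d1, d2, d3, hw⟩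
    rw [(hd1 y1 y2 y3 h1).deriv] at d1
    rw [(hd2 y1 y2 y3 h2).deriv] at d2
    rw [(hd3 y1 y2 y3 h3).deriv] at d3
    have hy1sq : y1 ^ 2 = 1 := by field_simp at d1; linear_combination d1
    have hy3sq : y3 ^ 2 = 1 := by field_simp at d3; linear_combination d3
    have hy1 : y1 = 1 ∨ y1 = -1 := by
      rcases mul_eq_zero.1 (show (y1 - 1) * (y1 + 1) = 0 by linear_combination hy1sq) with h | h
      · exact Or.inl (by linear_combination h)
      · exact Or.inr (by linear_combination h)
    have hy3 : y3 = 1 ∨ y3 = -1 := by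
      rcases mul_eq_zero.1 (show (y3 - 1) * (y3 + 1) = 0 by linear_combination hy3sq) with h | h
      · exact Or.inl (by linear_combination h)
      · exact Or.inr (by linear_combination h)
    rcases hy1 with rfl | rfl <;> rcases hy3 with rfl | rfl <;>
        simp only [W3] at hw <;> norm_num at d2 <;> norm_num at hw
    · -- S = 4 : y2^2 = 4
      have hy2sq : y2 ^ 2 = 4 := by field_simp at d2; linear_combination d2
      rcases mul_eq_zero.1 (show (y2 - 2) * (y2 + 2) = 0 by linear_combination hy2sq) with h | h
      · have : y2 = 2 := by linear_combination h
        subst this; left; rw [hw]; norm_num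
      · have : y2 = -2 := by linear_combination h
        subst this; right; left; rw [hw]; norm_num
    · -- S = -4 : y2^2 = -4
      have hy2sq : y2 ^ 2 = -4 := by field_simp at d2; linear_combination d2
      rcases mul_eq_zero.1 (show (y2 - 2 * Complex.I) * (y2 + 2 * Complex.I) = 0 by
          linear_combination hy2sq - 4 * hI) with h | h
      · have : y2 = 2 * Complex.I := by linear_combination h
        subst this; right; right; left; rw [hw]
        field_simp
        linear_combination (-4 : ℂ) * hI
      · have : y2 = -2 * Complex.I := by linear_combination h
        subst this; right; right; right; rw [hw]
        field_simp
        linear_combination (4 : ℂ) * hI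
  · have hIne : Complex.I ≠ 0 := Complex.I_ne_zero
    rintro (rfl | rfl | rfl | rfl)
    · refine ⟨1, 2, 1, one_ne_zero, two_ne_zero, one_ne_zero, ?_, ?_, ?_, ?_⟩
      · rw [(hd1 1 2 1 one_ne_zero).deriv]; norm_num
      · rw [(hd2 1 2 1 two_ne_zero).deriv]; norm_num
      · rw [(hd3 1 2 1 one_ne_zero).deriv]; norm_num
      · simp [W3]; norm_num
    · refine ⟨1, -2, 1, one_ne_zero, by norm_num, one_ne_zero, ?_, ?_, ?_, ?_⟩
      · rw [(hd1 1 (-2) 1 one_ne_zero).deriv]; norm_num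
      · rw [(hd2 1 (-2) 1 (by norm_num)).deriv]; norm_num
      · rw [(hd3 1 (-2) 1 one_ne_zero).deriv]; norm_num
      · simp [W3]; norm_num
    · have h2 : (2 * Complex.I : ℂ) ≠ 0 := by simp [hIne]
      refine ⟨-1, 2 * Complex.I, -1, by norm_num, h2, by norm_num, ?_, ?_, ?_, ?_⟩
      · rw [(hd1 (-1) (2 * Complex.I) (-1) (by norm_num)).deriv]; norm_num
      · rw [(hd2 (-1) (2 * Complex.I) (-1) h2).deriv]
        field_simp
        linear_combination (4 : ℂ) * hI
      · rw [(hd3 (-1) (2 * Complex.I) (-1) (by norm_num)).deriv]; norm_num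
      · simp only [W3]
        field_simp
        linear_combination (4 : ℂ) * hI
    · have h2 : (-2 * Complex.I : ℂ) ≠ 0 := by simp [hIne]
      refine ⟨-1, -2 * Complex.I, -1, by norm_num, h2, by norm_num, ?_, ?_, ?_, ?_⟩
      · rw [(hd1 (-1) (-2 * Complex.I) (-1) (by norm_num)).deriv]; norm_num
      · rw [(hd2 (-1) (-2 * Complex.I) (-1) h2).deriv]
        field_simp
        linear_combination (4 : ℂ) * hI
      · rw [(hd3 (-1) (-2 * Complex.I) (-1) (by norm_num)).deriv]; norm_num
      · simp only [W3]
        field_simp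
        linear_combination (-4 : ℂ) * hI
end
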